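/- Let m ≥ 2 and let μ be a probability measure supported on the closed ball B_r(0) ⊂ ℝ^m that is invariant under all rotations about the origin. Let y be a random vector with law μ. Then z = 0 is the unique point achieving min{ E d(z, y) : z ∈ B_r(0) }, where d is the Euclidean distance. In fact, for every unit vector v, the function t ↦ E d(tv, y) has strictly positive derivative for all t ∈ (0, r). -/

import Mathlib

open MeasureTheory Metric
open scoped RealInnerProductSpace


/-- monotonicity of `u ↦ u / √(u² + c)` for `c ≥ 0`. -/
lemma auxH_nonneg {c u : ℝ} (hu : 0 ≤ u) : 0 ≤ u / Real.sqrt (u ^ 2 + c) :=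
  div_nonneg hu (Real.sqrt_nonneg _)

lemma auxH_odd (c u : ℝ) : (-u) / Real.sqrt ((-u) ^ 2 + c) = -(u / Real.sqrt (u ^ 2 + c)) := by
  rw [neg_pow, ← neg_div]; ring_nf

lemma auxH_mono_pos {c a b : ℝ} (hc : 0 ≤ c) (ha : 0 ≤ a) (hab : a ≤ b) :
    a / Real.sqrt (a ^ 2 + c) ≤ b / Real.sqrt (b ^ 2 + c) := by
  rcases eq_or_lt_of_le ha with h0 | hapos
  · rw [← h0, zero_div]; exact auxH_nonneg (le_trans ha hab)
  have hb : 0 < b := lt_of_lt_of_le hapos hab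
  have hda : 0 < Real.sqrt (a ^ 2 + c) := Real.sqrt_pos.2 (by positivity)
  have hdb : 0 < Real.sqrt (b ^ 2 + c) := Real.sqrt_pos.2 (by positivity)
  rw [div_le_div_iff₀ hda hdb]
  have h1 : a * Real.sqrt (b ^ 2 + c) = Real.sqrt (a ^ 2 * (b ^ 2 + c)) := by
    rw [Real.sqrt_mul (sq_nonneg a), Real.sqrt_sq hapos.le]
  have h2 : b * Real.sqrt (a ^ 2 + c) = Real.sqrt (b ^ 2 * (a ^ 2 + c)) := by
    rw [Real.sqrt_mul (sq_nonneg b), Real.sqrt_sq hb.le]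
  rw [h1, h2]
  apply Real.sqrt_le_sqrt
  nlinarith [mul_le_mul_of_nonneg_right (pow_le_pow_left₀ ha hab 2) hc]

lemma auxH_mono {c : ℝ} (hc : 0 ≤ c) : Monotone (fun u : ℝ => u / Real.sqrt (u ^ 2 + c)) := by
  intro a b hab
  rcases le_or_gt 0 a with ha | ha
  · exact auxH_mono_pos hc ha hab
  rcases le_or_gt 0 b with hb | hb
  · exact le_trans (by simpa using div_nonpos_iff.2 (Or.inr ⟨ha.le, Real.sqrt_nonneg _⟩))
      (auxH_nonneg hb)
  · have := auxH_mono_pos hc (by linarith : (0:ℝ) ≤ -b) (by linarith : -b ≤ -a)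
    simp only [auxH_odd] at this
    linarith

lemma auxH_mono_pos' {c a b : ℝ} (hc : 0 ≤ c) (hab : a ≤ b) :
    a / Real.sqrt (a ^ 2 + c) ≤ b / Real.sqrt (b ^ 2 + c) :=
  auxH_mono hc hab

lemma auxH_strict {c a b : ℝ} (hc : 0 < c) (hab : a < b) :
    a / Real.sqrt (a ^ 2 + c) < b / Real.sqrt (b ^ 2 + c) := by
  have key : ∀ x y : ℝ, 0 ≤ x → x < y →
      x / Real.sqrt (x ^ 2 + c) < y / Real.sqrt (y ^ 2 + c) := by
    intro x y hx hxy
    have hda : 0 < Real.sqrt (x ^ 2 + c) := Real.sqrt_pos.2 (by positivity)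
    have hdb : 0 < Real.sqrt (y ^ 2 + c) := Real.sqrt_pos.2 (by positivity)
    rw [div_lt_div_iff₀ hda hdb]
    have h1 : x * Real.sqrt (y ^ 2 + c) = Real.sqrt (x ^ 2 * (y ^ 2 + c)) := by
      rw [Real.sqrt_mul (sq_nonneg x), Real.sqrt_sq hx]
    have h2 : y * Real.sqrt (x ^ 2 + c) = Real.sqrt (y ^ 2 * (x ^ 2 + c)) := by
      rw [Real.sqrt_mul (sq_nonneg y), Real.sqrt_sq (by linarith)]
    rw [h1, h2]
    apply Real.sqrt_lt_sqrt (by positivity)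
    nlinarith [mul_lt_mul_of_pos_right (by nlinarith : x ^ 2 < y ^ 2) hc]
  rcases le_or_gt 0 a with ha | ha
  · exact key a b ha hab
  rcases le_or_gt 0 b with hb | hb
  · have h1 : a / Real.sqrt (a ^ 2 + c) < 0 := by
      apply div_neg_of_neg_of_pos ha (Real.sqrt_pos.2 (by positivity))
    rcases eq_or_lt_of_le hb with h0 | hbpos
    · rw [← h0, zero_div]; exact h1
    · exact lt_trans h1 (by positivity)
  · have := key (-b) (-a) (by linarith) (by linarith)
    simp only [auxH_odd] at this
    linarith


variable {m : ℕ}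

local notation "E" => EuclideanSpace ℝ (Fin m)

/-- distance formula -/
lemma dist_formula (v : E) (hv : ‖v‖ = 1) (t : ℝ) (y : E) :
    dist (t • v) y =
      Real.sqrt ((t - ⟪v, y⟫) ^ 2 + ‖y - ⟪v, y⟫ • v‖ ^ 2) := by
  set a := ⟪v, y⟫ with ha
  have hvv : ⟪v, v⟫ = 1 := by
    rw [real_inner_self_eq_norm_sq, hv]; norm_num
  have hdecomp : t • v - y = (t - a) • v - (y - a • v) := by
    rw [sub_smul]; abel
  have horth : ⟪(t - a) • v, y - a • v⟫ = 0 := by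
    rw [real_inner_smul_left, inner_sub_right, real_inner_smul_right, hvv]
    ring
  have hsq : dist (t • v) y ^ 2 = (t - a) ^ 2 + ‖y - a • v‖ ^ 2 := by
    rw [dist_eq_norm, hdecomp, norm_sub_sq_real, horth]
    rw [norm_smul, Real.norm_eq_abs, hv]
    rw [mul_one, sq_abs]
    ring
  rw [← hsq, Real.sqrt_sq dist_nonneg]




lemma measure_singleton_congr (μ : Measure E)
    (hrot : ∀ R : E ≃ₗᵢ[ℝ] E, μ.map R = μ) {x x' : E} (h : ‖x‖ = ‖x'‖) :
    μ {x} = μ {x'} := by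
  by_cases hxx : x = x'
  · rw [hxx]
  · set R : E ≃ₗᵢ[ℝ] E := Submodule.reflection (ℝ ∙ (x - x'))ᗮ with hR
    have hRx : R x = x' := Submodule.reflection_sub h
    have h1 : μ.map R {x'} = μ (R ⁻¹' {x'}) :=
      Measure.map_apply R.continuous.measurable (measurableSet_singleton _)
    have h2 : R ⁻¹' {x'} = {x} := by
      ext z
      simp only [Set.mem_preimage, Set.mem_singleton_iff]
      constructor
      · intro hz; exact R.injective (by rw [hz, hRx])
      · intro hz; rw [hz, hRx]
    have key : μ {x'} = μ {x} := by
      conv_lhs => rw [← hrot R]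
      rw [h1, h2]
    exact key.symm

lemma exists_unit_orthogonal (hm : 2 ≤ m) (v : E) (hv : ‖v‖ = 1) :
    ∃ w : E, ‖w‖ = 1 ∧ ⟪v, w⟫ = 0 := by
  have hv0 : v ≠ 0 := by intro h; rw [h, norm_zero] at hv; norm_num at hv
  have hdim : Module.finrank ℝ (ℝ ∙ v) + Module.finrank ℝ (ℝ ∙ v)ᗮ
      = Module.finrank ℝ E := Submodule.finrank_add_finrank_orthogonal _
  rw [finrank_euclideanSpace_fin, finrank_span_singleton hv0] at hdim
  have hpos : 0 < Module.finrank ℝ (ℝ ∙ v)ᗮ := by omega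
  have : Nontrivial (ℝ ∙ v)ᗮ := Module.finrank_pos_iff.mp hpos
  obtain ⟨⟨w', hw'mem⟩, hw'ne⟩ := exists_ne (0 : (ℝ ∙ v)ᗮ)
  have hw'0 : w' ≠ 0 := by
    intro h; exact hw'ne (Subtype.ext (by simp [h]))
  refine ⟨‖w'‖⁻¹ • w', ?_, ?_⟩
  · rw [norm_smul, norm_inv, norm_norm, inv_mul_cancel₀ (norm_ne_zero_iff.2 hw'0)]
  · rw [real_inner_smul_right]
    have := (Submodule.mem_orthogonal _ _).mp hw'mem v
      (Submodule.mem_span_singleton_self v)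
    rw [this, mul_zero]

lemma singleton_measure_zero (hm : 2 ≤ m) (μ : Measure E) [IsProbabilityMeasure μ]
    (hrot : ∀ R : E ≃ₗᵢ[ℝ] E, μ.map R = μ) {x : E} (hx : x ≠ 0) :
    μ {x} = 0 := by
  have hnpos : 0 < ‖x‖ := norm_pos_iff.2 hx
  obtain ⟨v, hv⟩ : ∃ v : E, ‖v‖ = 1 :=
    ⟨‖x‖⁻¹ • x, by rw [norm_smul, norm_inv, norm_norm, inv_mul_cancel₀ hnpos.ne']⟩
  obtain ⟨w, hw, hvw⟩ := exists_unit_orthogonal hm v hv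
  set u : ℕ → E := fun k => (Real.sqrt (1 + (k : ℝ) ^ 2))⁻¹ • (v + (k : ℝ) • w) with hu
  have hsq : ∀ k : ℕ, ‖v + (k : ℝ) • w‖ = Real.sqrt (1 + (k : ℝ) ^ 2) := by
    intro k
    have h1 : ‖v + (k : ℝ) • w‖ ^ 2 = 1 + (k : ℝ) ^ 2 := by
      rw [norm_add_sq_real, real_inner_smul_right, hvw, norm_smul, hv, hw,
        Real.norm_eq_abs]
      rw [mul_one, sq_abs]; ring
    rw [← h1, Real.sqrt_sq (norm_nonneg _)]
  have hsqrtpos : ∀ k : ℕ, (0:ℝ) < Real.sqrt (1 + (k : ℝ) ^ 2) :=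
    fun k => Real.sqrt_pos.2 (by positivity)
  have hun : ∀ k : ℕ, ‖u k‖ = 1 := by
    intro k
    rw [hu]
    simp only
    rw [norm_smul, norm_inv, Real.norm_eq_abs, abs_of_pos (hsqrtpos k), hsq k,
      inv_mul_cancel₀ (hsqrtpos k).ne']
  set p : ℕ → E := fun k => ‖x‖ • u k with hp
  have hpn : ∀ k : ℕ, ‖p k‖ = ‖x‖ := by
    intro k
    rw [hp]; simp only
    rw [norm_smul, hun, Real.norm_eq_abs, abs_of_pos hnpos, mul_one]
  have hmeq : ∀ k : ℕ, μ {p k} = μ {x} := fun k =>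
    measure_singleton_congr μ hrot (by rw [hpn k])
  -- injectivity
  have hinner : ∀ k : ℕ, ⟪w, u k⟫ = (k : ℝ) / Real.sqrt (1 + (k : ℝ) ^ 2) := by
    intro k
    rw [hu]; simp only
    rw [real_inner_smul_right, inner_add_right, real_inner_smul_right,
      real_inner_comm v w, hvw, real_inner_self_eq_norm_sq, hw]
    rw [div_eq_inv_mul]; ring
  have hpinj : Function.Injective p := by
    intro j k hjk
    have huj : u j = u k := smul_right_injective E hnpos.ne' hjk
    have h2 : (j : ℝ) / Real.sqrt (1 + (j : ℝ) ^ 2)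
        = (k : ℝ) / Real.sqrt (1 + (k : ℝ) ^ 2) := by
      rw [← hinner j, ← hinner k, huj]
    rw [div_eq_div_iff (hsqrtpos j).ne' (hsqrtpos k).ne'] at h2
    have h3 : (j : ℝ) ^ 2 * (1 + (k : ℝ) ^ 2) = (k : ℝ) ^ 2 * (1 + (j : ℝ) ^ 2) := by
      have := congrArg (· ^ 2) h2
      simp only [mul_pow] at this
      rw [Real.sq_sqrt (by positivity), Real.sq_sqrt (by positivity)] at this
      linarith
    have hj0 : (0:ℝ) ≤ (j : ℝ) := Nat.cast_nonneg j
    have hk0 : (0:ℝ) ≤ (k : ℝ) := Nat.cast_nonneg k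
    have : (j : ℝ) = (k : ℝ) := le_antisymm (by nlinarith) (by nlinarith)
    exact_mod_cast this
  by_contra hne
  have hdisj : Pairwise (Function.onFun Disjoint fun k => ({p k} : Set E)) := by
    intro j k hjk
    simp only [Function.onFun, Set.disjoint_singleton]
    exact fun h => hjk (hpinj h)
  have htot : μ (⋃ k, ({p k} : Set E)) = ∑' k : ℕ, μ {p k} :=
    measure_iUnion hdisj fun k => measurableSet_singleton _
  rw [tsum_congr fun k => hmeq k, ENNReal.tsum_const_eq_top_of_ne_zero hne] at htot
  exact measure_ne_top μ _ htot

lemma compl_line_pos (hm : 2 ≤ m) (μ : Measure E) [IsProbabilityMeasure μ]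
    (hrot : ∀ R : E ≃ₗᵢ[ℝ] E, μ.map R = μ) (v : E) (hv : ‖v‖ = 1) {t : ℝ}
    (ht : 0 < t) :
    0 < μ {y : E | ∃ s : ℝ, y = s • v ∧ t < |s|}ᶜ := by
  set Z : Set E := {y : E | ∃ s : ℝ, y = s • v ∧ t < |s|} with hZ
  have hv0 : v ≠ 0 := by intro h; rw [h, norm_zero] at hv; norm_num at hv
  have hZeq : Z = ((ℝ ∙ v : Submodule ℝ E) : Set E) ∩ {y : E | t < ‖y‖} := by
    ext y
    simp only [hZ, Set.mem_setOf_eq, Set.mem_inter_iff, SetLike.mem_coe,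
      Submodule.mem_span_singleton]
    constructor
    · rintro ⟨s, rfl, hs⟩
      refine ⟨⟨s, rfl⟩, ?_⟩
      rw [norm_smul, hv, mul_one, Real.norm_eq_abs]; exact hs
    · rintro ⟨⟨s, rfl⟩, hns⟩
      rw [norm_smul, hv, mul_one, Real.norm_eq_abs] at hns
      exact ⟨s, rfl, hns⟩
  have hZmeas : MeasurableSet Z := by
    rw [hZeq]
    exact ((Submodule.closed_of_finiteDimensional _).measurableSet).inter
      (measurableSet_lt measurable_const continuous_norm.measurable)
  obtain ⟨w, hw, hvw⟩ := exists_unit_orthogonal hm v hv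
  set R : E ≃ₗᵢ[ℝ] E := Submodule.reflection (ℝ ∙ (v - w))ᗮ with hRdef
  have hRv : R v = w := Submodule.reflection_sub (by rw [hv, hw])
  have hdisj : Disjoint Z (R ⁻¹' Z) := by
    rw [Set.disjoint_left]
    rintro y ⟨s, rfl, hs⟩ hyR
    obtain ⟨s', hs', hs'abs⟩ := hyR
    have hsw : s • w = s' • v := by
      rw [← hRv, ← _root_.map_smul R]
      exact hs'
    have : ⟪v, s • w⟫ = s' := by
      rw [hsw, real_inner_smul_right, real_inner_self_eq_norm_sq, hv]; norm_num
    rw [real_inner_smul_right, hvw, mul_zero] at this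
    rw [← this] at hs'abs
    simp at hs'abs
    linarith
  have hmapeq : μ (R ⁻¹' Z) = μ Z := by
    conv_rhs => rw [← hrot R]
    rw [Measure.map_apply R.continuous.measurable hZmeas]
  have hsum : μ Z + μ Z ≤ 1 := by
    calc μ Z + μ Z = μ Z + μ (R ⁻¹' Z) := by rw [hmapeq]
    _ = μ (Z ∪ R ⁻¹' Z) := (measure_union hdisj (R.continuous.measurable hZmeas)).symm
    _ ≤ μ Set.univ := measure_mono (Set.subset_univ _)
    _ = 1 := measure_univ
  by_contra hc
  push_neg at hc
  have hc0 : μ Zᶜ = 0 := le_antisymm hc zero_le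
  have h1 : μ Z = 1 := by
    have := measure_add_measure_compl hZmeas (μ := μ)
    rw [hc0, add_zero, measure_univ] at this
    exact this
  rw [h1] at hsum
  norm_num at hsum


lemma auxH_abs_le {c u : ℝ} (hc : 0 ≤ c) : |u / Real.sqrt (u ^ 2 + c)| ≤ 1 := by
  rcases eq_or_lt_of_le (Real.sqrt_nonneg (u ^ 2 + c)) with h0 | hpos
  · rw [← h0, div_zero, abs_zero]; norm_num
  rw [abs_div, abs_of_pos hpos, div_le_one hpos]
  calc |u| = Real.sqrt (u ^ 2) := by rw [Real.sqrt_sq_eq_abs]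
  _ ≤ Real.sqrt (u ^ 2 + c) := Real.sqrt_le_sqrt (by linarith)

lemma ae_norm_le (μ : Measure E) [IsProbabilityMeasure μ] {r : ℝ}
    (hsupp : μ (closedBall 0 r) = 1) : ∀ᵐ y ∂μ, ‖y‖ ≤ r := by
  have hcompl : μ (closedBall (0:E) r)ᶜ = 0 := by
    rw [measure_compl measurableSet_closedBall (measure_ne_top μ _), hsupp,
      measure_univ, tsub_self]
  have hball : ∀ᵐ y ∂μ, y ∈ closedBall (0:E) r := by
    rw [ae_iff]
    exact hcompl
  filter_upwards [hball] with y hy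
  exact mem_closedBall_zero_iff.mp hy

lemma integrable_dist_fun (μ : Measure E) [IsProbabilityMeasure μ] {r : ℝ}
    (hsupp : μ (closedBall 0 r) = 1) (z : E) :
    Integrable (fun y => dist z y) μ := by
  apply Integrable.mono' (integrable_const (‖z‖ + r))
  · exact (continuous_const.dist continuous_id).aestronglyMeasurable
  · filter_upwards [ae_norm_le μ hsupp] with y hy
    rw [Real.norm_eq_abs, abs_of_nonneg dist_nonneg]
    calc dist z y ≤ dist z 0 + dist 0 y := dist_triangle _ _ _
    _ = ‖z‖ + ‖y‖ := by rw [dist_zero_right, dist_zero_left]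
    _ ≤ ‖z‖ + r := by linarith

lemma key_deriv (hm : 2 ≤ m) (μ : Measure E) [IsProbabilityMeasure μ] {r : ℝ}
    (hsupp : μ (closedBall 0 r) = 1)
    (hrot : ∀ R : E ≃ₗᵢ[ℝ] E, μ.map R = μ)
    (v : E) (hv : ‖v‖ = 1) {t : ℝ} (ht : 0 < t) :
    0 < deriv (fun s : ℝ => ∫ y, dist (s • v) y ∂μ) t := by
  have hv0 : v ≠ 0 := by intro h; rw [h, norm_zero] at hv; norm_num at hv
  set a : E → ℝ := fun y => ⟪v, y⟫ with ha
  set c : E → ℝ := fun y => ‖y - ⟪v, y⟫ • v‖ ^ 2 with hc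
  have hc_nonneg : ∀ y, 0 ≤ c y := fun y => sq_nonneg _
  set ψ : E → ℝ := fun y => (t - a y) / Real.sqrt ((t - a y) ^ 2 + c y) with hψ
  have hacont : Continuous a := Continuous.inner continuous_const continuous_id
  have hccont : Continuous c := by
    apply Continuous.pow
    exact (continuous_id.sub (hacont.smul continuous_const)).norm
  have hψmeas : Measurable ψ := by
    apply Measurable.div
    · exact (continuous_const.sub hacont).measurable
    · exact (Real.continuous_sqrt.comp
        (((continuous_const.sub hacont).pow 2).add hccont)).measurable
  have hψbound : ∀ y, |ψ y| ≤ 1 := fun y => auxH_abs_le (hc_nonneg y)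
  -- differentiation under the integral sign
  have hmain := hasDerivAt_integral_of_dominated_loc_of_lip
    (F := fun (s : ℝ) (y : E) => dist (s • v) y) (F' := ψ) (x₀ := t)
    (bound := fun _ => (1 : ℝ)) (s := ball t 1) (ball_mem_nhds t one_pos)
    (Filter.Eventually.of_forall fun s =>
      (continuous_const.dist continuous_id).aestronglyMeasurable)
    (integrable_dist_fun μ hsupp _)
    hψmeas.aestronglyMeasurable
    (Filter.Eventually.of_forall fun y => ?_)
    (integrable_const 1)
    ?_
  · obtain ⟨hψint, hderiv⟩ := hmain
    rw [hderiv.deriv]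
    -- now show 0 < ∫ ψ
    set S : E ≃ₗᵢ[ℝ] E := Submodule.reflection (ℝ ∙ v)ᗮ with hS
    have hSv : S v = -v :=
      Submodule.reflection_mem_subspace_orthogonalComplement_eq_neg
        ((ℝ ∙ v).le_orthogonal_orthogonal (Submodule.mem_span_singleton_self v))
    have hSS : ∀ z, S (S z) = z := fun z => by
      rw [hS]; exact Submodule.reflection_reflection _ z
    have hSa : ∀ y : E, ⟪v, S y⟫ = -⟪v, y⟫ := by
      intro y
      calc ⟪v, S y⟫ = ⟪S v, S (S y)⟫ := (S.inner_map_map v (S y)).symm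
      _ = ⟪S v, y⟫ := by rw [hSS y]
      _ = -⟪v, y⟫ := by rw [hSv, inner_neg_left]
    have hSc : ∀ y : E, ‖S y - ⟪v, S y⟫ • v‖ ^ 2 = ‖y - ⟪v, y⟫ • v‖ ^ 2 := by
      intro y
      have h1 : S y - ⟪v, S y⟫ • v = S (y - ⟪v, y⟫ • v) := by
        rw [map_sub, _root_.map_smul, hSv, hSa y]
        rw [neg_smul, smul_neg]
      rw [h1, S.norm_map]
    have hψS : ∀ y, ψ (S y) = (t + a y) / Real.sqrt ((t + a y) ^ 2 + c y) := by
      intro y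
      show (t - ⟪v, S y⟫) / Real.sqrt ((t - ⟪v, S y⟫) ^ 2
        + ‖S y - ⟪v, S y⟫ • v‖ ^ 2) = _
      rw [hSc y, hSa y, sub_neg_eq_add]
    have hψSmeas : Measurable fun y => ψ (S y) :=
      hψmeas.comp S.continuous.measurable
    have hψSint : Integrable (fun y => ψ (S y)) μ := by
      apply Integrable.mono' (integrable_const (1:ℝ))
        hψSmeas.aestronglyMeasurable
      exact Filter.Eventually.of_forall fun y => by
        rw [Real.norm_eq_abs]; exact hψbound (S y)
    have hmap : ∫ y, ψ y ∂μ = ∫ y, ψ (S y) ∂μ := by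
      have h := integral_map (φ := (S : E → E)) (f := ψ)
        S.continuous.aemeasurable
        (by rw [hrot S]; exact hψmeas.aestronglyMeasurable)
      rw [hrot S] at h
      exact h
    set F : E → ℝ := fun y => ψ y + ψ (S y) with hF
    have hFnonneg : ∀ y, 0 ≤ F y := by
      intro y
      rw [hF]; simp only
      rw [hψS y, hψ]; simp only
      have hmono := auxH_mono_pos' (hc_nonneg y)
        (show -(t - a y) ≤ t + a y by linarith)
      rw [auxH_odd] at hmono
      linarith
    have hFpos : ∀ y, y ∉ {y : E | ∃ s : ℝ, y = s • v ∧ t < |s|} → 0 < F y := by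
      intro y hy
      rw [hF]; simp only
      rw [hψS y, hψ]; simp only
      rcases eq_or_lt_of_le (hc_nonneg y) with hc0 | hcpos
      · -- y is on the line
        have hyline : y = a y • v := by
          have h0 : ‖y - a y • v‖ ^ 2 = 0 := hc0.symm
          have h2 : ‖y - a y • v‖ = 0 := by
            have hnn := norm_nonneg (y - a y • v)
            nlinarith
          rw [← sub_eq_zero]
          exact norm_eq_zero.mp h2
        have habs : |a y| ≤ t := by
          by_contra habs
          push_neg at habs
          exact hy ⟨a y, hyline, habs⟩
        rcases eq_or_lt_of_le (show a y ≤ t from (abs_le.mp habs).2) with h1 | h1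
        · -- t - a y = 0, t + a y = 2t > 0
          have h2 : 0 < t + a y := by rw [← h1]; linarith
          have hpos : 0 < (t + a y) / Real.sqrt ((t + a y) ^ 2 + c y) := by
            apply div_pos h2 (Real.sqrt_pos.2 (by positivity))
          have hnon : 0 ≤ (t - a y) / Real.sqrt ((t - a y) ^ 2 + c y) :=
            auxH_nonneg (by linarith)
          linarith
        · have h2 : 0 < t - a y := by linarith
          have hpos : 0 < (t - a y) / Real.sqrt ((t - a y) ^ 2 + c y) := by
            apply div_pos h2 (Real.sqrt_pos.2 (by positivity))
          have hnon : 0 ≤ (t + a y) / Real.sqrt ((t + a y) ^ 2 + c y) :=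
            auxH_nonneg (by linarith [(abs_le.mp habs).1])
          linarith
      · have hstrict := auxH_strict hcpos (show -(t - a y) < t + a y by linarith)
        rw [auxH_odd] at hstrict
        linarith
    have hFint : Integrable F μ := hψint.add hψSint
    have hsuppF : {y : E | ∃ s : ℝ, y = s • v ∧ t < |s|}ᶜ ⊆ Function.support F :=
      fun y hy => (hFpos y hy).ne'
    have hμsupp : 0 < μ (Function.support F) :=
      lt_of_lt_of_le (compl_line_pos hm μ hrot v hv ht) (measure_mono hsuppF)
    have hintFpos : 0 < ∫ y, F y ∂μ :=
      (integral_pos_iff_support_of_nonneg hFnonneg hFint).2 hμsupp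
    have hsplit : ∫ y, F y ∂μ = (∫ y, ψ y ∂μ) + ∫ y, ψ (S y) ∂μ :=
      integral_add hψint hψSint
    rw [hsplit, ← hmap] at hintFpos
    linarith
  · -- Lipschitz
    have hlip : LipschitzWith 1 (fun s : ℝ => dist (s • v) y) := by
      apply LipschitzWith.of_dist_le_mul
      intro s s'
      rw [NNReal.coe_one, one_mul]
      calc dist (dist (s • v) y) (dist (s' • v) y) ≤ dist (s • v) (s' • v) :=
          dist_dist_dist_le_left _ _ _
      _ = dist s s' := by
          rw [dist_eq_norm, ← sub_smul, norm_smul, hv, mul_one, Real.norm_eq_abs,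
            Real.dist_eq]
    have h1 : Real.nnabs (1:ℝ) = 1 := by simp
    show LipschitzOnWith (Real.nnabs 1) (fun s : ℝ => dist (s • v) y) (ball t 1)
    rw [h1]
    exact hlip.lipschitzOnWith (s := ball t 1)
  · -- a.e. differentiability
    have hne : ∀ᵐ y ∂μ, y ≠ t • v := by
      rw [ae_iff]
      simp only [ne_eq, not_not, Set.setOf_eq_eq_singleton]
      exact singleton_measure_zero hm μ hrot (smul_ne_zero ht.ne' hv0)
    filter_upwards [hne] with y hy
    have heq : (fun s : ℝ => dist (s • v) y)
        = fun s : ℝ => Real.sqrt ((s - a y) ^ 2 + c y) :=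
      funext fun s => dist_formula v hv s y
    rw [heq]
    have hq : HasDerivAt (fun s : ℝ => (s - a y) ^ 2 + c y) (2 * (t - a y)) t := by
      have := (((hasDerivAt_id t).sub_const (a y)).pow 2).add_const (c y)
      simpa using this
    have hqne : (t - a y) ^ 2 + c y ≠ 0 := by
      intro h0
      apply hy
      have hd : dist (t • v) y = 0 := by
        rw [dist_formula v hv t y]
        show Real.sqrt ((t - a y) ^ 2 + c y) = 0
        rw [h0, Real.sqrt_zero]
      rw [dist_comm] at hd
      exact dist_eq_zero.mp hd
    have := hq.sqrt hqne
    refine this.congr_deriv (Eq.symm ?_)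
    show (t - a y) / Real.sqrt ((t - a y) ^ 2 + c y)
      = 2 * (t - a y) / (2 * Real.sqrt ((t - a y) ^ 2 + c y))
    have hrad : 0 ≤ (t - a y) ^ 2 + c y := add_nonneg (sq_nonneg _) (hc_nonneg y)
    have hspos : Real.sqrt ((t - a y) ^ 2 + c y) ≠ 0 := by
      rw [Real.sqrt_ne_zero' ]
      exact lt_of_le_of_ne hrad (Ne.symm hqne)
    rw [mul_div_mul_left _ _ (two_ne_zero' ℝ)]

lemma g_lipschitz (μ : Measure E) [IsProbabilityMeasure μ] {r : ℝ}
    (hsupp : μ (closedBall 0 r) = 1) (v : E) (hv : ‖v‖ = 1) :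
    LipschitzWith 1 (fun s : ℝ => ∫ y, dist (s • v) y ∂μ) := by
  apply LipschitzWith.of_dist_le_mul
  intro s s'
  rw [NNReal.coe_one, one_mul, Real.dist_eq, Real.dist_eq]
  have hint1 := integrable_dist_fun μ hsupp (s • v)
  have hint2 := integrable_dist_fun μ hsupp (s' • v)
  have hsub : (∫ y, dist (s • v) y ∂μ) - (∫ y, dist (s' • v) y ∂μ)
      = ∫ y, (dist (s • v) y - dist (s' • v) y) ∂μ := (integral_sub hint1 hint2).symm
  rw [hsub]
  have h1 := norm_integral_le_integral_norm (μ := μ)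
    (f := fun y => dist (s • v) y - dist (s' • v) y)
  simp only [Real.norm_eq_abs] at h1
  calc |∫ y, (dist (s • v) y - dist (s' • v) y) ∂μ|
      ≤ ∫ y, |dist (s • v) y - dist (s' • v) y| ∂μ := h1
  _ ≤ ∫ _, |s - s'| ∂μ := by
      apply integral_mono (hint1.sub hint2).abs (integrable_const _)
      intro y
      calc |dist (s • v) y - dist (s' • v) y| ≤ dist (s • v) (s' • v) :=
        abs_dist_sub_le _ _ _
      _ = |s - s'| := by
        rw [dist_eq_norm, ← sub_smul, norm_smul, hv, mul_one, Real.norm_eq_abs]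
  _ = |s - s'| := by rw [integral_const]; simp

/-- Let `m ≥ 2` and let `μ` be a rotation-invariant probability measure supported on the
closed ball `B_r(0) ⊂ ℝ^m`. Then `z = 0` is the unique minimizer over `B_r(0)` of
`z ↦ E d(z,y)`; in fact, for every unit vector `v`, the function `t ↦ E d(tv, y)` has
strictly positive derivative on `(0, r)`. -/
theorem stmt6 (m : ℕ) (hm : 2 ≤ m) (r : ℝ) (hr : 0 < r)
    (μ : Measure (EuclideanSpace ℝ (Fin m))) [IsProbabilityMeasure μ]
    (hsupp : μ (closedBall 0 r) = 1)
    (hrot : ∀ R : EuclideanSpace ℝ (Fin m) ≃ₗᵢ[ℝ] EuclideanSpace ℝ (Fin m),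
      μ.map R = μ) :
    (∀ z ∈ closedBall (0 : EuclideanSpace ℝ (Fin m)) r, z ≠ 0 →
      (∫ y, dist (0 : EuclideanSpace ℝ (Fin m)) y ∂μ) < ∫ y, dist z y ∂μ) ∧
    ∀ v : EuclideanSpace ℝ (Fin m), ‖v‖ = 1 → ∀ t ∈ Set.Ioo (0 : ℝ) r,
      0 < deriv (fun t : ℝ => ∫ y, dist (t • v) y ∂μ) t := by
  constructor
  · intro z _ hz0
    have hz0' : 0 < ‖z‖ := norm_pos_iff.2 hz0
    set v : EuclideanSpace ℝ (Fin m) := ‖z‖⁻¹ • z with hvdef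
    have hv : ‖v‖ = 1 := by
      rw [hvdef, norm_smul, norm_inv, norm_norm, inv_mul_cancel₀ hz0'.ne']
    set g : ℝ → ℝ := fun s => ∫ y, dist (s • v) y ∂μ with hg
    have hgc : ContinuousOn g (Set.Icc 0 ‖z‖) :=
      (g_lipschitz μ hsupp v hv).continuous.continuousOn
    have hmono : StrictMonoOn g (Set.Icc 0 ‖z‖) := by
      apply strictMonoOn_of_deriv_pos (convex_Icc _ _) hgc
      intro x hx
      rw [interior_Icc] at hx
      exact key_deriv hm μ hsupp hrot v hv hx.1
    have hlt := hmono (Set.left_mem_Icc.2 hz0'.le)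
      (Set.right_mem_Icc.2 hz0'.le) hz0'
    have hg0 : g 0 = ∫ y, dist (0 : EuclideanSpace ℝ (Fin m)) y ∂μ := by
      rw [hg]; simp only [zero_smul]
    have hgz : g ‖z‖ = ∫ y, dist z y ∂μ := by
      rw [hg]
      simp only [hvdef, smul_inv_smul₀ hz0'.ne']
    rw [← hg0, ← hgz]
    exact hlt
  · intro v hv t ht
    exact key_deriv hm μ hsupp hrot v hv ht.1
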